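/- Let G be an amenable group (admitting a left-invariant finitely additive probability measure, equivalently an invariant mean μ : ℓ^∞(G; ℝ) → ℝ with μ(𝟙) = 1). Then for any nonzero integer n, the class of the constant function n·𝟙 in the coinvariants ℓ^∞(G; ℤ)_G is nonzero. -/

import Mathlib

/-- `φ : G → ℤ` is bounded. -/
def IsBdd {G : Type*} (φ : G → ℤ) : Prop := ∃ C : ℤ, ∀ x : G, |φ x| ≤ C

/-- `φ : G → ℝ` is bounded. -/
def IsBddR {G : Type*} (φ : G → ℝ) : Prop := ∃ C : ℝ, ∀ x : G, |φ x| ≤ C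

/-- The subgroup of `G → ℤ` generated by the elements `φ - g·φ`, where `φ` is bounded and
`(g·φ)(x) = φ (xg)`.  The coinvariants `ℓ^∞(G;ℤ)_G` is `ℓ^∞(G;ℤ)` modulo this subgroup, so
an element of `ℓ^∞(G;ℤ)` has nonzero class in the coinvariants iff it does not lie in this
subgroup. -/
def coinvariantsKernel (G : Type*) [Group G] : AddSubgroup (G → ℤ) :=
  AddSubgroup.closure
    {ψ : G → ℤ | ∃ φ : G → ℤ, IsBdd φ ∧ ∃ g : G, ψ = φ - fun x => φ (x * g)}

lemma isBddR_cast {G : Type*} {φ : G → ℤ} (h : IsBdd φ) :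
    IsBddR (fun x => (φ x : ℝ)) := by
  obtain ⟨C, hC⟩ := h
  exact ⟨(C : ℝ), fun x => by show |((φ x : ℤ) : ℝ)| ≤ (C : ℝ); exact_mod_cast hC x⟩

lemma isBddR_add {G : Type*} {φ ψ : G → ℝ} (h1 : IsBddR φ) (h2 : IsBddR ψ) :
    IsBddR (φ + ψ) := by
  obtain ⟨C, hC⟩ := h1; obtain ⟨D, hD⟩ := h2
  exact ⟨C + D, fun x => (abs_add_le _ _).trans (add_le_add (hC x) (hD x))⟩

lemma isBddR_smul {G : Type*} (c : ℝ) {φ : G → ℝ} (h : IsBddR φ) :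
    IsBddR (c • φ) := by
  obtain ⟨C, hC⟩ := h
  exact ⟨|c| * C, fun x => by
    simp only [Pi.smul_apply, smul_eq_mul, abs_mul]
    exact mul_le_mul_of_nonneg_left (hC x) (abs_nonneg c)⟩

theorem const_class_nonzero_in_coinvariants_of_amenable {G : Type*} [Group G]
    -- an invariant mean on `ℓ^∞(G; ℝ)`, witnessing amenability of `G`
    (μ : (G → ℝ) → ℝ)
    (hadd : ∀ φ ψ : G → ℝ, IsBddR φ → IsBddR ψ → μ (φ + ψ) = μ φ + μ ψ)
    (hsmul : ∀ (c : ℝ) (φ : G → ℝ), IsBddR φ → μ (c • φ) = c * μ φ)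
    (hpos : ∀ φ : G → ℝ, IsBddR φ → (∀ x, 0 ≤ φ x) → 0 ≤ μ φ)
    (hinv : ∀ (φ : G → ℝ), IsBddR φ → ∀ g : G, μ (fun x => φ (x * g)) = μ φ)
    (hone : μ (fun _ => (1 : ℝ)) = 1)
    (n : ℤ) (hn : n ≠ 0) :
    (fun _ : G => n) ∉ coinvariantsKernel G := by
  -- the key invariant: everything in the kernel is bounded with mean zero
  have key : ∀ ψ ∈ coinvariantsKernel G,
      IsBdd ψ ∧ μ (fun x => (ψ x : ℝ)) = 0 := by
    intro ψ hψ
    induction hψ using AddSubgroup.closure_induction with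
    | mem ψ hψ =>
      obtain ⟨φ, hφ, g, rfl⟩ := hψ
      obtain ⟨C, hC⟩ := hφ
      constructor
      · refine ⟨C + C, fun x => ?_⟩
        have := (abs_sub (φ x) (φ (x * g))).trans (add_le_add (hC x) (hC (x * g)))
        simpa using this
      · have hb : IsBddR (fun x => (φ x : ℝ)) := isBddR_cast ⟨C, hC⟩
        have hb2 : IsBddR (fun x => ((φ (x * g) : ℤ) : ℝ)) :=
          ⟨(C : ℝ), fun x => by show |((φ (x * g) : ℤ) : ℝ)| ≤ (C : ℝ); exact_mod_cast hC (x * g)⟩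
        have hb2' : IsBddR ((-1 : ℝ) • fun x => ((φ (x * g) : ℤ) : ℝ)) :=
          isBddR_smul _ hb2
        have h1 : (fun x => (((φ - fun y => φ (y * g)) x : ℤ) : ℝ))
            = (fun x => (φ x : ℝ)) + (-1 : ℝ) • (fun x => ((φ (x * g) : ℤ) : ℝ)) := by
          funext x
          simp [sub_eq_add_neg]
        rw [h1, hadd _ _ hb hb2', hsmul _ _ hb2, hinv _ hb g]
        ring
    | zero =>
      constructor
      · exact ⟨0, fun x => by simp⟩
      · have h0 : (fun x : G => ((0 : G → ℤ) x : ℝ)) = (0 : ℝ) • (fun _ : G => (1 : ℝ)) := by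
          funext x; simp
        rw [h0, hsmul _ _ ⟨1, fun x => by simp⟩]
        ring
    | add a b _ _ iha ihb =>
      obtain ⟨⟨Ca, hCa⟩, hma⟩ := iha
      obtain ⟨⟨Cb, hCb⟩, hmb⟩ := ihb
      constructor
      · exact ⟨Ca + Cb, fun x => (abs_add_le _ _).trans (add_le_add (hCa x) (hCb x))⟩
      · have h1 : (fun x => (((a + b) x : ℤ) : ℝ))
            = (fun x => (a x : ℝ)) + (fun x => (b x : ℝ)) := by
          funext x; simp
        rw [h1, hadd _ _ (isBddR_cast ⟨Ca, hCa⟩) (isBddR_cast ⟨Cb, hCb⟩), hma, hmb]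
        ring
    | neg a _ iha =>
      obtain ⟨⟨Ca, hCa⟩, hma⟩ := iha
      constructor
      · exact ⟨Ca, fun x => by simpa using hCa x⟩
      · have h1 : (fun x => (((-a) x : ℤ) : ℝ)) = (-1 : ℝ) • (fun x => (a x : ℝ)) := by
          funext x; simp
        rw [h1, hsmul _ _ (isBddR_cast ⟨Ca, hCa⟩), hma]
        ring
  intro hmem
  have := (key _ hmem).2
  have h1 : (fun x : G => ((fun _ : G => n) x : ℝ)) = (n : ℝ) • (fun _ : G => (1 : ℝ)) := by
    funext x; simp
  rw [h1, hsmul _ _ ⟨1, fun x => by simp⟩, hone] at this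
  simp at this
  exact hn (by exact_mod_cast this)
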